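/- arXiv:2406.02543 — 2 statements merged into one kernel-verified Lean document; each statement's English description precedes it below -/
import Mathlib

section
/- Let α > 1 and let μ be the Zipf distribution on the positive integers with exponent α, i.e., μ(i) = i^{−α}/ζ(α) where ζ(α) = Σ_{j=1}^∞ j^{−α}. Let X₁,…,X_k be i.i.d. samples from μ and let U_k = Σ_{i=1}^∞ μ(i) 𝟙{i ∉ {X₁,…,X_k}} be the missing mass. Then for every β > 0 there exists a constant C > 0 (depending only on α and β) such that for all k ≥ 1, E[U_k] ≤ C · k^{−((α−1)/α − β)}. -/
open MeasureTheory Filter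
open scoped Classical ENNReal

/-- The i.i.d. sample measure: the law of `k` independent draws from `μ`. -/
noncomputable def sampleMeasure {A : Type*} [MeasurableSpace A] (μ : PMF A) (k : ℕ) :
    Measure (Fin k → A) :=
  Measure.pi fun _ => μ.toMeasure

/-- The missing mass `U_k = ∑_x μ(x) 𝟙{x ∉ {X₁,…,X_k}}` of a sample `ω = (X₁,…,X_k)`. -/
noncomputable def missingMass {A : Type*} {k : ℕ} (μ : PMF A) (ω : Fin k → A) : ℝ :=
  ∑' x : A, (μ x).toReal * (if ∀ i, ω i ≠ x then 1 else 0)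

/-- The expected missing mass `E[U_k]` of `k` i.i.d. draws from `μ`. -/
noncomputable def expectedMissingMass {A : Type*} [MeasurableSpace A] (μ : PMF A) (k : ℕ) : ℝ :=
  ∫ ω, missingMass μ ω ∂(sampleMeasure μ k)


lemma avoid_set_eq {k : ℕ} (x : ℕ) :
    {ω : Fin k → ℕ | ∀ i, ω i ≠ x} = Set.univ.pi (fun _ : Fin k => ({x}ᶜ : Set ℕ)) := by
  ext ω; simp [Set.mem_pi]

lemma measurable_avoid {k : ℕ} (x : ℕ) :
    MeasurableSet {ω : Fin k → ℕ | ∀ i, ω i ≠ x} := by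
  rw [avoid_set_eq]
  exact MeasurableSet.univ_pi fun _ => (measurableSet_singleton x).compl

lemma measure_avoid (μ : PMF ℕ) {k : ℕ} (x : ℕ) :
    sampleMeasure μ k {ω : Fin k → ℕ | ∀ i, ω i ≠ x} = (1 - μ x) ^ k := by
  have hc : μ.toMeasure ({x}ᶜ) = 1 - μ x := by
    rw [measure_compl (measurableSet_singleton x) (measure_ne_top _ _),
        measure_univ, PMF.toMeasure_apply_singleton _ _ (measurableSet_singleton x)]
  rw [avoid_set_eq, sampleMeasure, Measure.pi_pi]
  simp [hc]

lemma indicator_avoid {k : ℕ} (x : ℕ) (ω : Fin k → ℕ) [Decidable (∀ i, ω i ≠ x)] :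
    (if ∀ i, ω i ≠ x then (1:ℝ) else 0)
      = Set.indicator {ω : Fin k → ℕ | ∀ i, ω i ≠ x} (fun _ => (1:ℝ)) ω := by
  by_cases h : ∀ i, ω i ≠ x
  · rw [if_pos h, Set.indicator_of_mem (show ω ∈ {ω : Fin k → ℕ | ∀ i, ω i ≠ x} from h)]
  · rw [if_neg h, Set.indicator_of_notMem (show ω ∉ {ω : Fin k → ℕ | ∀ i, ω i ≠ x} from h)]

lemma integral_avoid (μ : PMF ℕ) {k : ℕ} (x : ℕ) :
    ∫ ω, Set.indicator {ω : Fin k → ℕ | ∀ i, ω i ≠ x} (fun _ => (1:ℝ)) ω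
      ∂(sampleMeasure μ k) = (1 - (μ x).toReal) ^ k := by
  rw [integral_indicator_const _ (measurable_avoid x), measureReal_def, measure_avoid μ x]
  rw [ENNReal.toReal_pow, ENNReal.toReal_sub_of_le (PMF.coe_le_one μ x) ENNReal.one_ne_top]
  simp

lemma expected_eq (μ : PMF ℕ) (k : ℕ) :
    expectedMissingMass μ k = ∑' x : ℕ, (μ x).toReal * (1 - (μ x).toReal) ^ k := by
  haveI : IsProbabilityMeasure (sampleMeasure μ k) := by
    unfold sampleMeasure; infer_instance
  rw [expectedMissingMass]
  set F : ℕ → (Fin k → ℕ) → ℝ := fun x ω =>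
    (μ x).toReal * Set.indicator {ω : Fin k → ℕ | ∀ i, ω i ≠ x} (fun _ => (1:ℝ)) ω with hF
  have hmm : (fun ω : Fin k → ℕ => missingMass μ ω) = fun ω => ∑' x : ℕ, F x ω := by
    funext ω
    rw [missingMass]
    exact tsum_congr fun x => by rw [hF, indicator_avoid]
  rw [hmm]
  have hmeas : ∀ x : ℕ, AEStronglyMeasurable (F x) (sampleMeasure μ k) := fun x =>
    (measurable_const.mul (measurable_const.indicator (measurable_avoid x))).aestronglyMeasurable
  have hsum : ∑' x : ℕ, ∫⁻ ω, ‖F x ω‖₊ ∂(sampleMeasure μ k) ≠ ∞ := by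
    have hb : ∀ x : ℕ, ∫⁻ ω, ‖F x ω‖₊ ∂(sampleMeasure μ k) ≤ μ x := by
      intro x
      have hptw : ∀ ω : Fin k → ℕ, (‖F x ω‖₊ : ℝ≥0∞) ≤ μ x := by
        intro ω
        rw [hF]
        by_cases h : ω ∈ {ω : Fin k → ℕ | ∀ i, ω i ≠ x}
        · simp only [Set.indicator_of_mem h, mul_one]
          rw [← ENNReal.ofReal_toReal (PMF.apply_ne_top μ x)]
          simp [Real.nnnorm_of_nonneg ENNReal.toReal_nonneg, ENNReal.ofReal]
        · simp only [Set.indicator_of_notMem h, mul_zero, nnnorm_zero, ENNReal.coe_zero]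
          exact zero_le
      calc ∫⁻ ω, ‖F x ω‖₊ ∂(sampleMeasure μ k) ≤ ∫⁻ _, μ x ∂(sampleMeasure μ k) :=
            lintegral_mono hptw
        _ = μ x := by simp
    refine ne_top_of_le_ne_top ?_ (ENNReal.tsum_le_tsum hb)
    rw [PMF.tsum_coe]
    exact ENNReal.one_ne_top
  rw [integral_tsum hmeas hsum]
  exact tsum_congr fun x => by rw [hF, integral_const_mul, integral_avoid]

/-- Key pointwise bound: `(1-p)^k ≤ (k p)^(-γ)` for `0 < p ≤ 1`, `1 ≤ k`, `0 < γ ≤ 1`. -/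
lemma pow_one_sub_le {p γ : ℝ} (hp : 0 < p) (hp1 : p ≤ 1) {k : ℕ} (hk : 1 ≤ k)
    (hγ : 0 < γ) (hγ1 : γ ≤ 1) : (1 - p) ^ k ≤ ((k : ℝ) * p) ^ (-γ) := by
  have hkp : 0 < (k : ℝ) * p := by positivity
  rcases le_or_gt ((k : ℝ) * p) 1 with h | h
  · calc (1 - p) ^ k ≤ 1 := pow_le_one₀ (by linarith) (by linarith)
      _ ≤ ((k : ℝ) * p) ^ (-γ) :=
        Real.one_le_rpow_of_pos_of_le_one_of_nonpos hkp h (by linarith)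
  · have h1 : (1 - p) ^ k ≤ ((k : ℝ) * p)⁻¹ := by
      have e1 : 1 - p ≤ Real.exp (-p) := by linarith [Real.add_one_le_exp (-p)]
      have e2 : (1 - p) ^ k ≤ Real.exp (-p) ^ k :=
        pow_le_pow_left₀ (by linarith) e1 k
      have e3 : Real.exp (-p) ^ k = Real.exp (-((k : ℝ) * p)) := by
        rw [← Real.exp_nat_mul]; ring_nf
      have e4 : Real.exp (-((k : ℝ) * p)) ≤ ((k : ℝ) * p)⁻¹ := by
        rw [Real.exp_neg]
        exact inv_anti₀ hkp (by linarith [Real.add_one_le_exp ((k : ℝ) * p)])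
      calc (1 - p) ^ k ≤ Real.exp (-p) ^ k := e2
        _ = Real.exp (-((k : ℝ) * p)) := e3
        _ ≤ ((k : ℝ) * p)⁻¹ := e4
    calc (1 - p) ^ k ≤ ((k : ℝ) * p)⁻¹ := h1
      _ = ((k : ℝ) * p) ^ (-1 : ℝ) := (Real.rpow_neg_one _).symm
      _ ≤ ((k : ℝ) * p) ^ (-γ) :=
        Real.rpow_le_rpow_of_exponent_le h.le (by linarith)

/-- Termwise bound: `p (1-p)^k ≤ k^(-γ) * p^(1-γ)` for `0 ≤ p ≤ 1`. -/
lemma term_bound {p γ : ℝ} (hp : 0 ≤ p) (hp1 : p ≤ 1) {k : ℕ} (hk : 1 ≤ k)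
    (hγ : 0 < γ) (hγ1 : γ < 1) :
    p * (1 - p) ^ k ≤ p ^ (1 - γ) * (k : ℝ) ^ (-γ) := by
  rcases eq_or_lt_of_le hp with h0 | h0
  · rw [← h0, Real.zero_rpow (by linarith), zero_mul, zero_mul]
  · have hk0 : (0 : ℝ) < k := by exact_mod_cast hk
    calc p * (1 - p) ^ k ≤ p * ((k : ℝ) * p) ^ (-γ) :=
          mul_le_mul_of_nonneg_left (pow_one_sub_le h0 hp1 hk hγ hγ1.le) hp
      _ = p * ((k : ℝ) ^ (-γ) * p ^ (-γ)) := by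
          rw [Real.mul_rpow (le_of_lt hk0) hp]
      _ = (p * p ^ (-γ)) * (k : ℝ) ^ (-γ) := by ring
      _ = p ^ (1 - γ) * (k : ℝ) ^ (-γ) := by
          rw [show (1 : ℝ) - γ = 1 + (-γ) by ring, Real.rpow_add h0, Real.rpow_one]


/-- missing mass of a Zipf distribution.  Let `μ` be the Zipf distribution
on the positive integers with exponent `α > 1`, i.e. `μ(i) = i^(-α) / ζ(α)` for `i ≥ 1`
(and `μ(0) = 0`), where `ζ(α) = ∑_{j ≥ 1} j^(-α)`.  Then for every `β > 0` there is a
constant `C > 0` (depending only on `α` and `β`) such that the expected missing mass of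
`k` i.i.d. samples satisfies `E[U_k] ≤ C · k^(-((α-1)/α - β))` for all `k ≥ 1`. -/
theorem zipf_expected_missingMass_le {α : ℝ} (hα : 1 < α) (μ : PMF ℕ)
    (hμ0 : μ 0 = 0)
    (hμ : ∀ i : ℕ, 0 < i →
      (μ i).toReal = (i : ℝ) ^ (-α) / ∑' j : ℕ, ((j : ℝ) + 1) ^ (-α))
    {β : ℝ} (hβ : 0 < β) :
    ∃ C : ℝ, 0 < C ∧ ∀ k : ℕ, 1 ≤ k →
      expectedMissingMass μ k ≤ C * (k : ℝ) ^ (-((α - 1) / α - β)) := by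
  have hα0 : (0:ℝ) < α := by linarith
  set Z : ℝ := ∑' j : ℕ, ((j : ℝ) + 1) ^ (-α) with hZdef
  set γ : ℝ := (α - 1) / α - β with hγdef
  have hp0 : ∀ x : ℕ, 0 ≤ (μ x).toReal := fun x => ENNReal.toReal_nonneg
  have hp1 : ∀ x : ℕ, (μ x).toReal ≤ 1 := fun x => by
    have := ENNReal.toReal_mono ENNReal.one_ne_top (PMF.coe_le_one μ x)
    simpa using this
  have hpsum : Summable (fun x : ℕ => (μ x).toReal) :=
    ENNReal.summable_toReal (by rw [PMF.tsum_coe]; exact ENNReal.one_ne_top)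
  have hpsum1 : ∑' x : ℕ, (μ x).toReal = 1 := by
    rw [← ENNReal.tsum_toReal_eq (fun x => PMF.apply_ne_top μ x), PMF.tsum_coe,
      ENNReal.toReal_one]
  by_cases hγpos : 0 < γ
  · -- main case: 0 < γ < 1
    have hγ1 : γ < 1 := by
      have h1 : (α - 1) / α < 1 := (div_lt_one hα0).2 (by linarith)
      rw [hγdef]; linarith
    have hZsum : Summable (fun j : ℕ => ((j : ℝ) + 1) ^ (-α)) := by
      have h0 : Summable (fun j : ℕ => ((j : ℝ)) ^ (-α)) :=
        Real.summable_nat_rpow.2 (by linarith)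
      have h1 := (summable_nat_add_iff 1).2 h0
      refine h1.congr fun j => ?_
      push_cast
      ring_nf
    have hZ1 : (1:ℝ) ≤ Z := by
      have h0 : (((0:ℕ) : ℝ) + 1) ^ (-α) = 1 := by norm_num
      have := Summable.le_tsum hZsum 0 (fun j _ => Real.rpow_nonneg (by positivity) _)
      rw [h0] at this
      exact this
    have hZpos : (0:ℝ) < Z := lt_of_lt_of_le one_pos hZ1
    have hexp : -α * (1 - γ) = -(1 + α * β) := by
      rw [hγdef]
      field_simp
      ring
    have hfg : ∀ x : ℕ, (μ x).toReal ^ (1 - γ)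
        = (x : ℝ) ^ (-(1 + α * β)) / Z ^ (1 - γ) := by
      intro x
      rcases Nat.eq_zero_or_pos x with h | h
      · subst h
        rw [hμ0]
        simp only [ENNReal.toReal_zero, Nat.cast_zero]
        rw [Real.zero_rpow (by linarith : (1:ℝ) - γ ≠ 0),
          Real.zero_rpow (by nlinarith : -(1 + α * β) ≠ 0), zero_div]
      · rw [hμ x h, Real.div_rpow (Real.rpow_nonneg (Nat.cast_nonneg x) _) hZpos.le,
          ← Real.rpow_mul (Nat.cast_nonneg x), hexp]
    have hgsum : Summable (fun x : ℕ => (x : ℝ) ^ (-(1 + α * β)) / Z ^ (1 - γ)) :=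
      (Real.summable_nat_rpow.2 (by nlinarith)).div_const _
    have hfsum : Summable (fun x : ℕ => (μ x).toReal ^ (1 - γ)) :=
      hgsum.congr fun x => (hfg x).symm
    set S : ℝ := ∑' x : ℕ, (μ x).toReal ^ (1 - γ) with hSdef
    have hS0 : 0 ≤ S := tsum_nonneg fun x => Real.rpow_nonneg (hp0 x) _
    refine ⟨S + 1, by linarith, fun k hk => ?_⟩
    rw [expected_eq]
    have hk0 : (0:ℝ) < (k : ℝ) := by exact_mod_cast Nat.lt_of_lt_of_le Nat.zero_lt_one hk
    have hkr : (0:ℝ) < (k : ℝ) ^ (-γ) := Real.rpow_pos_of_pos hk0 _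
    have hb : ∀ x : ℕ, (μ x).toReal * (1 - (μ x).toReal) ^ k
        ≤ (μ x).toReal ^ (1 - γ) * (k : ℝ) ^ (-γ) :=
      fun x => term_bound (hp0 x) (hp1 x) hk hγpos hγ1
    have hrsum : Summable (fun x : ℕ => (μ x).toReal ^ (1 - γ) * (k : ℝ) ^ (-γ)) :=
      hfsum.mul_right _
    calc ∑' x : ℕ, (μ x).toReal * (1 - (μ x).toReal) ^ k
        ≤ ∑' x : ℕ, (μ x).toReal ^ (1 - γ) * (k : ℝ) ^ (-γ) :=
          Summable.tsum_le_tsum hb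
            (Summable.of_nonneg_of_le
              (fun x => mul_nonneg (hp0 x) (pow_nonneg (by linarith [hp1 x]) k)) hb hrsum)
            hrsum
      _ = S * (k : ℝ) ^ (-γ) := tsum_mul_right
      _ ≤ (S + 1) * (k : ℝ) ^ (-γ) := mul_le_mul_of_nonneg_right (by linarith) hkr.le
  · -- trivial case: γ ≤ 0, so k^(-γ) ≥ 1 and the missing mass is at most 1
    refine ⟨1, one_pos, fun k hk => ?_⟩
    rw [expected_eq]
    have hterm : ∀ x : ℕ, (μ x).toReal * (1 - (μ x).toReal) ^ k ≤ (μ x).toReal := by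
      intro x
      have h1 : (1 - (μ x).toReal) ^ k ≤ 1 :=
        pow_le_one₀ (by linarith [hp1 x]) (by linarith [hp0 x])
      calc (μ x).toReal * (1 - (μ x).toReal) ^ k ≤ (μ x).toReal * 1 :=
            mul_le_mul_of_nonneg_left h1 (hp0 x)
        _ = (μ x).toReal := mul_one _
    have h2 : ∑' x : ℕ, (μ x).toReal * (1 - (μ x).toReal) ^ k ≤ 1 := by
      have h2' : ∑' x : ℕ, (μ x).toReal * (1 - (μ x).toReal) ^ k ≤ ∑' x : ℕ, (μ x).toReal :=
        Summable.tsum_le_tsum hterm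
          (Summable.of_nonneg_of_le
            (fun x => mul_nonneg (hp0 x) (pow_nonneg (by linarith [hp1 x]) k)) hterm hpsum)
          hpsum
      linarith [hpsum1]
    have h3 : (1:ℝ) ≤ (k : ℝ) ^ (-γ) :=
      Real.one_le_rpow (by exact_mod_cast hk) (by linarith [not_lt.1 hγpos])
    calc ∑' x : ℕ, (μ x).toReal * (1 - (μ x).toReal) ^ k ≤ 1 := h2
      _ ≤ (k : ℝ) ^ (-γ) := h3
      _ = 1 * (k : ℝ) ^ (-γ) := (one_mul _).symm
end

section
/- Let μ be a probability distribution on a countable set X, let k be a positive natural number, and let X₁,…,X_k be i.i.d. samples from μ. Let M be the number of elements of X that appear exactly once among X₁,…,X_k, let U_k^{GT} = M/k be the Good–Turing estimator, let U_k = Σ_{x∈X} μ(x) 𝟙{x ∉ {X₁,…,X_k}} be the missing mass, and let U_k^{(1)} = Σ_{x∈X} μ(x) 𝟙{x appears exactly once among X₁,…,X_k}. Then E[U_k^{GT}] − E[U_k] = E[U_k^{(1)}]/k. -/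
open MeasureTheory
open scoped Classical ENNReal

/-- `M`, the number of elements appearing exactly once in the sample `ω = (X₁,…,X_k)`:
an element appearing exactly once corresponds to exactly one sample index `i` whose value
is not attained by any other index. -/
noncomputable def onceCount {A : Type*} {k : ℕ} (ω : Fin k → A) : ℕ :=
  (Finset.univ.filter fun i : Fin k => ∀ j : Fin k, j ≠ i → ω j ≠ ω i).card

/-- `U_k⁽¹⁾ = ∑_x μ(x) 𝟙{x appears exactly once among X₁,…,X_k}`, the cumulative
probability of the elements appearing exactly once in the sample. -/
noncomputable def onceMass {A : Type*} {k : ℕ} (μ : PMF A) (ω : Fin k → A) : ℝ :=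
  ∑' x : A, (μ x).toReal * (if ∃! i : Fin k, ω i = x then 1 else 0)

set_option linter.unusedSectionVars false

section aux

variable {A : Type*} [Countable A] [MeasurableSpace A] [MeasurableSingletonClass A] {k : ℕ}

private lemma pmf_compl (μ : PMF A) (x : A) : μ.toMeasure {x}ᶜ = 1 - μ x := by
  have : IsProbabilityMeasure μ.toMeasure := PMF.toMeasure.isProbabilityMeasure μ
  rw [measure_compl (measurableSet_singleton x) (measure_ne_top _ _), measure_univ,
    PMF.toMeasure_apply_singleton _ _ (measurableSet_singleton x)]

private def Tset (x : A) (i : Fin k) : Set (Fin k → A) :=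
  Set.pi Set.univ fun j => if j = i then {x} else {x}ᶜ

private lemma mem_Tset {x : A} {i : Fin k} {ω : Fin k → A} :
    ω ∈ Tset x i ↔ ω i = x ∧ ∀ j, j ≠ i → ω j ≠ x := by
  simp only [Tset, Set.mem_pi, Set.mem_univ, forall_true_left]
  constructor
  · intro h
    refine ⟨by simpa using h i, fun j hj => by simpa [hj] using h j⟩
  · rintro ⟨h1, h2⟩ j
    by_cases hj : j = i
    · subst hj; simpa using h1
    · simpa [hj] using h2 j hj

private lemma measurableSet_Tset (x : A) (i : Fin k) : MeasurableSet (Tset x i) :=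
  MeasurableSet.pi Set.countable_univ fun j _ => by
    by_cases h : j = i
    · simp only [if_pos h]; exact measurableSet_singleton x
    · simp only [if_neg h]; exact (measurableSet_singleton x).compl

private lemma measure_Tset (μ : PMF A) (x : A) (i : Fin k) :
    sampleMeasure μ k (Tset x i) = μ x * (1 - μ x) ^ (k - 1) := by
  rw [sampleMeasure, Tset, Measure.pi_pi]
  have h : ∀ j ∈ Finset.univ.erase i,
      μ.toMeasure (if j = i then ({x} : Set A) else {x}ᶜ) = 1 - μ x := by
    intro j hj
    rw [if_neg (Finset.ne_of_mem_erase hj), pmf_compl]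
  rw [← Finset.mul_prod_erase Finset.univ _ (Finset.mem_univ i), if_pos rfl,
    PMF.toMeasure_apply_singleton _ _ (measurableSet_singleton x),
    Finset.prod_congr rfl h, Finset.prod_const,
    Finset.card_erase_of_mem (Finset.mem_univ i), Finset.card_univ, Fintype.card_fin]

private lemma measure_Sset (μ : PMF A) (x : A) :
    sampleMeasure μ k {ω : Fin k → A | ∀ i, ω i ≠ x} = (1 - μ x) ^ k := by
  have h : {ω : Fin k → A | ∀ i, ω i ≠ x} = Set.pi Set.univ fun _ => ({x}ᶜ : Set A) := by
    ext ω; simp [Set.mem_pi]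
  rw [h, sampleMeasure, Measure.pi_pi]
  simp [pmf_compl μ x, Finset.prod_const, Finset.card_univ]

private lemma Bset_eq (i : Fin k) :
    {ω : Fin k → A | ∀ j, j ≠ i → ω j ≠ ω i} = ⋃ x : A, Tset x i := by
  ext ω
  simp only [Set.mem_setOf_eq, Set.mem_iUnion, mem_Tset]
  constructor
  · intro h; exact ⟨ω i, rfl, h⟩
  · rintro ⟨x, rfl, h⟩; exact h

private lemma measure_Bset (μ : PMF A) (i : Fin k) :
    sampleMeasure μ k {ω : Fin k → A | ∀ j, j ≠ i → ω j ≠ ω i}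
      = ∑' x : A, μ x * (1 - μ x) ^ (k - 1) := by
  rw [Bset_eq]
  rw [measure_iUnion ?_ fun x => measurableSet_Tset x i]
  · exact tsum_congr fun x => measure_Tset μ x i
  · intro x y hxy
    rw [Function.onFun, Set.disjoint_left]
    intro ω hx hy
    exact hxy ((mem_Tset.mp hx).1.symm.trans (mem_Tset.mp hy).1)

private lemma Eset_eq (x : A) :
    {ω : Fin k → A | ∃! i, ω i = x} = ⋃ i : Fin k, Tset x i := by
  ext ω
  simp only [Set.mem_setOf_eq, Set.mem_iUnion, mem_Tset, ExistsUnique]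
  constructor
  · rintro ⟨i, hi, hu⟩
    exact ⟨i, hi, fun j hj hx => hj (hu j hx)⟩
  · rintro ⟨i, hi, hu⟩
    exact ⟨i, hi, fun j hx => by by_contra hj; exact hu j hj hx⟩

private lemma measure_Eset (μ : PMF A) (x : A) :
    sampleMeasure μ k {ω : Fin k → A | ∃! i : Fin k, ω i = x}
      = (k : ℝ≥0∞) * (μ x * (1 - μ x) ^ (k - 1)) := by
  rw [Eset_eq]
  rw [measure_iUnion ?_ fun i => measurableSet_Tset x i]
  · rw [tsum_fintype]
    simp [measure_Tset μ x, Finset.sum_const, Finset.card_univ, nsmul_eq_mul]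
  · intro i j hij
    rw [Function.onFun, Set.disjoint_left]
    intro ω hi hj
    exact (mem_Tset.mp hj).2 i hij (mem_Tset.mp hi).1

private lemma measurableSet_Sset (x : A) :
    MeasurableSet {ω : Fin k → A | ∀ i, ω i ≠ x} := by
  have h : {ω : Fin k → A | ∀ i, ω i ≠ x}
      = ⋂ i, (fun ω : Fin k → A => ω i) ⁻¹' {x}ᶜ := by
    ext ω; simp
  rw [h]
  exact MeasurableSet.iInter fun i =>
    (measurable_pi_apply i) (measurableSet_singleton x).compl

private lemma measurableSet_Eset (x : A) :
    MeasurableSet {ω : Fin k → A | ∃! i : Fin k, ω i = x} := by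
  rw [Eset_eq]
  exact MeasurableSet.iUnion fun i => measurableSet_Tset x i

private lemma measurableSet_Bset (i : Fin k) :
    MeasurableSet {ω : Fin k → A | ∀ j, j ≠ i → ω j ≠ ω i} := by
  rw [Bset_eq]
  exact MeasurableSet.iUnion fun x => measurableSet_Tset x i

private lemma integral_mass (μ : PMF A) (S : A → Set (Fin k → A))
    (hS : ∀ x, MeasurableSet (S x)) :
    ∫ ω, (∑' x : A, (μ x).toReal * Set.indicator (S x) (fun _ => (1 : ℝ)) ω) ∂(sampleMeasure μ k)
      = (∑' x : A, μ x * sampleMeasure μ k (S x)).toReal := by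
  set ν := sampleMeasure μ k
  set g : (Fin k → A) → ℝ≥0∞ := fun ω => ∑' x : A, μ x * Set.indicator (S x) 1 ω with hg
  have hgm : Measurable g :=
    Measurable.ennreal_tsum fun x => (measurable_one.indicator (hS x)).const_mul _
  have hind : ∀ (x : A) (ω : Fin k → A), Set.indicator (S x) (1 : (Fin k → A) → ℝ≥0∞) ω ≤ 1 := by
    intro x ω; rw [Set.indicator_apply]; split <;> simp
  have hfin : ∀ ω, g ω ≤ 1 := by
    intro ω
    refine (ENNReal.tsum_le_tsum fun x => ?_).trans_eq μ.tsum_coe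
    calc μ x * Set.indicator (S x) 1 ω ≤ μ x * 1 := mul_le_mul_right (hind x ω) _
      _ = μ x := mul_one _
  have hpt : ∀ ω, (∑' x : A, (μ x).toReal * Set.indicator (S x) (fun _ => (1 : ℝ)) ω)
      = (g ω).toReal := by
    intro ω
    rw [hg, ENNReal.tsum_toReal_eq]
    · refine tsum_congr fun x => ?_
      rw [ENNReal.toReal_mul, Set.indicator_apply, Set.indicator_apply]
      split <;> simp
    · intro x
      exact ENNReal.mul_ne_top (μ.apply_ne_top x)
        (lt_of_le_of_lt (hind x ω) ENNReal.one_lt_top).ne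
  have hlin : ∫⁻ ω, g ω ∂ν = ∑' x : A, μ x * ν (S x) := by
    rw [hg, lintegral_tsum fun x =>
      ((measurable_one.indicator (hS x)).const_mul _).aemeasurable]
    refine tsum_congr fun x => ?_
    rw [lintegral_const_mul _ (measurable_one.indicator (hS x)), lintegral_indicator_one (hS x)]
  simp_rw [hpt]
  rw [integral_toReal hgm.aemeasurable
    (Filter.Eventually.of_forall fun ω => lt_of_le_of_lt (hfin ω) ENNReal.one_lt_top), hlin]

end aux

/-- bias of the Good–Turing estimator.  For `k` i.i.d. samples from a
distribution `μ` on a countable set, with `U_k^GT = M/k` the Good–Turing estimator,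
`U_k` the missing mass and `U_k⁽¹⁾` the mass of elements seen exactly once:
`E[U_k^GT] - E[U_k] = E[U_k⁽¹⁾]/k`. -/
theorem goodTuring_bias {A : Type*} [Countable A]
    [MeasurableSpace A] [MeasurableSingletonClass A] {k : ℕ} (hk : 0 < k) (μ : PMF A) :
    (∫ ω, (onceCount ω : ℝ) / k ∂(sampleMeasure μ k)) -
        (∫ ω, missingMass μ ω ∂(sampleMeasure μ k)) =
      (∫ ω, onceMass μ ω ∂(sampleMeasure μ k)) / k := by
  have hprob : IsProbabilityMeasure (sampleMeasure μ k) := by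
    unfold sampleMeasure; infer_instance
  set ν := sampleMeasure μ k with hν
  set q : A → ℝ≥0∞ := fun x => 1 - μ x with hqdef
  set C : ℝ≥0∞ := ∑' x : A, μ x * q x ^ (k - 1) with hCdef
  set D : ℝ≥0∞ := ∑' x : A, μ x * q x ^ k with hDdef
  set F : ℝ≥0∞ := ∑' x : A, μ x * (μ x * q x ^ (k - 1)) with hFdef
  have hq1 : ∀ x, q x ≤ 1 := fun x => tsub_le_self
  have hbound : ∀ f : A → ℝ≥0∞, (∀ x, f x ≤ μ x) → (∑' x, f x) ≤ 1 := fun f h =>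
    (ENNReal.tsum_le_tsum h).trans_eq μ.tsum_coe
  have hC1 : C ≤ 1 := hbound _ fun x => by
    calc μ x * q x ^ (k - 1) ≤ μ x * 1 := mul_le_mul_right (pow_le_one' (hq1 x) _) _
      _ = μ x := mul_one _
  have hD1 : D ≤ 1 := hbound _ fun x => by
    calc μ x * q x ^ k ≤ μ x * 1 := mul_le_mul_right (pow_le_one' (hq1 x) _) _
      _ = μ x := mul_one _
  have hF1 : F ≤ 1 := hbound _ fun x => by
    calc μ x * (μ x * q x ^ (k - 1)) ≤ μ x * 1 :=
        mul_le_mul_right (mul_le_one' (μ.coe_le_one x) (pow_le_one' (hq1 x) _)) _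
      _ = μ x := mul_one _
  have hDt : D ≠ ⊤ := (hD1.trans_lt ENNReal.one_lt_top).ne
  have hFt : F ≠ ⊤ := (hF1.trans_lt ENNReal.one_lt_top).ne
  have key : C = D + F := by
    rw [hCdef, hDdef, hFdef, ← ENNReal.tsum_add]
    refine tsum_congr fun x => ?_
    have hqx : q x + μ x = 1 := tsub_add_cancel_of_le (μ.coe_le_one x)
    have hk' : k - 1 + 1 = k := Nat.succ_pred_eq_of_pos hk
    calc μ x * q x ^ (k - 1) = μ x * q x ^ (k - 1) * (q x + μ x) := by rw [hqx, mul_one]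
      _ = μ x * q x ^ k + μ x * (μ x * q x ^ (k - 1)) := by
          rw [mul_add]
          congr 1
          · rw [mul_assoc, ← pow_succ, hk']
          · ring
  -- integral computations
  have h2 : ∫ ω, missingMass μ ω ∂ν = D.toReal := by
    have h := integral_mass μ (fun x => {ω : Fin k → A | ∀ i, ω i ≠ x}) measurableSet_Sset
    beta_reduce at h
    have hm : ∀ ω : Fin k → A, missingMass μ ω
        = ∑' x : A, (μ x).toReal *
            Set.indicator {ω : Fin k → A | ∀ i, ω i ≠ x} (fun _ => (1 : ℝ)) ω := by
      intro ω
      exact tsum_congr fun x => by simp [Set.indicator_apply]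
    simp_rw [hm]
    rw [hν]
    refine h.trans ?_
    rw [hDdef]
    congr 1
    exact tsum_congr fun x => by rw [measure_Sset μ x]
  have h3 : ∫ ω, onceMass μ ω ∂ν = (k : ℝ) * F.toReal := by
    have h := integral_mass μ (fun x => {ω : Fin k → A | ∃! i : Fin k, ω i = x}) measurableSet_Eset
    have hm : ∀ ω : Fin k → A, onceMass μ ω
        = ∑' x : A, (μ x).toReal *
            Set.indicator {ω : Fin k → A | ∃! i : Fin k, ω i = x} (fun _ => (1 : ℝ)) ω := by
      intro ω
      exact tsum_congr fun x => by simp [Set.indicator_apply]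
    beta_reduce at h
    simp_rw [hm]
    rw [hν]
    refine h.trans ?_
    have h4 : (∑' x : A, μ x * sampleMeasure μ k {ω : Fin k → A | ∃! i : Fin k, ω i = x})
        = (k : ℝ≥0∞) * F := by
      rw [hFdef, ← ENNReal.tsum_mul_left]
      refine tsum_congr fun x => ?_
      rw [measure_Eset μ x]
      ring
    rw [h4, ENNReal.toReal_mul, ENNReal.toReal_natCast]
  have h1 : ∫ ω, (onceCount ω : ℝ) ∂ν = (k : ℝ) * C.toReal := by
    have hcount : ∀ ω : Fin k → A, (onceCount ω : ℝ)
        = ∑ i : Fin k, Set.indicator {ω' : Fin k → A | ∀ j, j ≠ i → ω' j ≠ ω' i}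
            (fun _ => (1 : ℝ)) ω := by
      intro ω
      rw [onceCount, Finset.card_filter]
      push_cast
      refine Finset.sum_congr rfl fun i _ => ?_
      rw [Set.indicator_apply]
      simp only [Set.mem_setOf_eq]
    simp_rw [hcount]
    rw [integral_finset_sum _ fun i _ =>
      (integrable_const (1 : ℝ)).indicator (measurableSet_Bset i)]
    have : ∀ i : Fin k,
        ∫ ω, Set.indicator {ω' : Fin k → A | ∀ j, j ≠ i → ω' j ≠ ω' i}
          (fun _ => (1 : ℝ)) ω ∂ν = C.toReal := by
      intro i
      rw [integral_indicator_const (1 : ℝ) (measurableSet_Bset i), hν, measureReal_def, measure_Bset μ i, smul_eq_mul,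
        mul_one, hCdef]
    simp_rw [this]
    rw [Finset.sum_const, Finset.card_univ, Fintype.card_fin, nsmul_eq_mul]
  -- final arithmetic
  have hk0 : (k : ℝ) ≠ 0 := Nat.cast_ne_zero.mpr hk.ne'
  have hCr : C.toReal = D.toReal + F.toReal := by
    rw [key, ENNReal.toReal_add hDt hFt]
  rw [MeasureTheory.integral_div, h1, h2, h3, mul_div_cancel_left₀ _ hk0,
    mul_div_cancel_left₀ _ hk0, hCr]
  ring
end
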